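/- Let cl be a maximal exceptional sequence in Z^r and fix a direction ν. Then the sum of |L_c| over even c equals the sum of |L_c| over odd c, each being 2^{r-1}, where L_c = {x ∈ cl : x_ν = c}. -/

import Mathlib

def IsExceptional {r m : ℕ} (cl : Fin m → (Fin r → ℤ)) : Prop :=
  ∀ i j : Fin m, i < j → ∃ ν : Fin r, cl j ν - cl i ν = 1

theorem stmt_4 {r : ℕ} (cl : Fin (2 ^ (r + 1)) → (Fin (r + 1) → ℤ))
    (h : IsExceptional cl) (ν : Fin (r + 1)) :
    (Finset.univ.filter fun i => Even (cl i ν)).card = 2 ^ r ∧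
    (Finset.univ.filter fun i => Odd (cl i ν)).card = 2 ^ r := by
  classical
  set f : Fin (2 ^ (r + 1)) → (Fin (r + 1) → ZMod 2) :=
    fun i μ => ((cl i μ : ℤ) : ZMod 2) with hf
  have key : ∀ i j : Fin (2 ^ (r + 1)), i < j → f i ≠ f j := by
    intro i j hij heq
    obtain ⟨μ, hμ⟩ := h i j hij
    have h1 : ((cl j μ : ℤ) : ZMod 2) - ((cl i μ : ℤ) : ZMod 2) = 1 := by
      rw [← Int.cast_sub, hμ]; norm_num
    have h2 : f i μ = f j μ := congrFun heq μ
    simp only [hf] at h2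
    rw [h2, sub_self] at h1
    exact absurd h1 (by decide)
  have hinj : Function.Injective f := by
    intro i j hij
    by_contra hne
    rcases lt_or_gt_of_ne hne with hlt | hlt
    · exact key i j hlt hij
    · exact key j i hlt hij.symm
  have hcard : Fintype.card (Fin (2 ^ (r + 1))) = Fintype.card (Fin (r + 1) → ZMod 2) := by
    rw [Fintype.card_fun, ZMod.card, Fintype.card_fin, Fintype.card_fin]
  have hbij : Function.Bijective f :=
    (Fintype.bijective_iff_injective_and_card f).2 ⟨hinj, hcard⟩
  -- relate Even to f i ν = 0
  have heven : ∀ i, Even (cl i ν) ↔ f i ν = 0 := by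
    intro i
    rw [even_iff_two_dvd, hf]
    exact (ZMod.intCast_zmod_eq_zero_iff_dvd (cl i ν) 2).symm
  -- card of even filter equals card of {v | v ν = 0}
  have hE : (Finset.univ.filter fun i => Even (cl i ν)).card =
      (Finset.univ.filter fun v : Fin (r + 1) → ZMod 2 => v ν = 0).card := by
    apply Finset.card_bij (fun i _ => f i)
    · intro i hi
      simp only [Finset.mem_filter, Finset.mem_univ, true_and] at hi ⊢
      exact (heven i).mp hi
    · intro i hi j hj hij
      exact hinj hij
    · intro v hv
      obtain ⟨i, hi⟩ := hbij.2 v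
      refine ⟨i, ?_, hi⟩
      simp only [Finset.mem_filter, Finset.mem_univ, true_and] at hv ⊢
      exact (heven i).mpr (hi ▸ hv)
  -- card of {v | v ν = 0} = card of {v | ¬ v ν = 0} via involution
  have hswap : (Finset.univ.filter fun v : Fin (r + 1) → ZMod 2 => v ν = 0).card =
      (Finset.univ.filter fun v : Fin (r + 1) → ZMod 2 => ¬ v ν = 0).card := by
    have flip : ∀ x : ZMod 2, x + 1 + 1 = x := by decide
    have h01 : ∀ x : ZMod 2, x = 0 → ¬ x + 1 = 0 := by decide
    have h10 : ∀ x : ZMod 2, ¬ x = 0 → x + 1 = 0 := by decide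
    apply Finset.card_nbij' (fun v => Function.update v ν (v ν + 1))
      (fun v => Function.update v ν (v ν + 1))
    · intro v hv
      simp only [Finset.mem_filter, Finset.mem_univ, true_and] at hv ⊢
      simp only [Finset.coe_filter, Finset.mem_coe, Finset.mem_filter, Finset.mem_univ, true_and, Set.mem_setOf_eq, Function.update_self] at hv ⊢
      exact h01 _ hv
    · intro v hv
      simp only [Finset.mem_filter, Finset.mem_univ, true_and] at hv ⊢
      simp only [Finset.coe_filter, Finset.mem_coe, Finset.mem_filter, Finset.mem_univ, true_and, Set.mem_setOf_eq, Function.update_self] at hv ⊢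
      exact h10 _ hv
    · intro v _
      funext μ
      by_cases hμ : μ = ν
      · subst hμ; simp [Function.update_self, flip]
      · simp [Function.update_of_ne hμ]
    · intro v _
      funext μ
      by_cases hμ : μ = ν
      · subst hμ; simp [Function.update_self, flip]
      · simp [Function.update_of_ne hμ]
  have htot : (Finset.univ.filter fun v : Fin (r + 1) → ZMod 2 => v ν = 0).card +
      (Finset.univ.filter fun v : Fin (r + 1) → ZMod 2 => ¬ v ν = 0).card = 2 ^ (r + 1) := by
    rw [Finset.card_filter_add_card_filter_not]
    simp [hcard.symm]
  have hN0 : (Finset.univ.filter fun v : Fin (r + 1) → ZMod 2 => v ν = 0).card = 2 ^ r := by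
    rw [← hswap] at htot
    have h2 : (Finset.univ.filter fun v : Fin (r + 1) → ZMod 2 => v ν = 0).card +
        (Finset.univ.filter fun v : Fin (r + 1) → ZMod 2 => v ν = 0).card = 2 ^ r + 2 ^ r := by
      rw [htot, pow_succ]; ring
    linarith
  have hEfin : (Finset.univ.filter fun i => Even (cl i ν)).card = 2 ^ r := hE.trans hN0
  refine ⟨hEfin, ?_⟩
  have htot2 : (Finset.univ.filter fun i => Even (cl i ν)).card +
      (Finset.univ.filter fun i => ¬ Even (cl i ν)).card = 2 ^ (r + 1) := by
    rw [Finset.card_filter_add_card_filter_not]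
    simp
  have hodd : (Finset.univ.filter fun i => Odd (cl i ν)).card =
      (Finset.univ.filter fun i => ¬ Even (cl i ν)).card := by
    congr 1
    ext i
    simp [Int.not_even_iff_odd]
  rw [hodd]
  rw [hEfin] at htot2
  have h2 : 2 ^ r + (Finset.univ.filter fun i => ¬ Even (cl i ν)).card = 2 ^ r + 2 ^ r := by
    rw [htot2, pow_succ]; ring
  exact Nat.add_left_cancel h2
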